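/- Let E be a row-finite graph, F the free commutative monoid on E⁰, →₁ the one-step rewriting relation replacing a non-sink vertex by the sum of ranges of its outgoing edges, → its reflexive transitive closure, and ∼ the congruence generated by →. Then for nonzero α, β ∈ F, α ∼ β if and only if there exists nonzero γ ∈ F with α → γ and β → γ (confluence of the graph monoid relation). -/

import Mathlib

open Finsupp

/-- One step of the rewriting relation `→₁` on the free commutative monoid `F` on the
vertices of a graph `(V, E, s, r)`: replace a non-sink vertex `v` by the sum of the
ranges of its outgoing edges. -/
def graphStep {V E : Type*} (s r : E → V) (a b : V →₀ ℕ) : Prop :=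
  ∃ (v : V) (α : V →₀ ℕ), (∃ e, s e = v) ∧
    a = α + Finsupp.single v 1 ∧
    b = α + ∑ᶠ e ∈ {e : E | s e = v}, Finsupp.single (r e) 1

section Aux
variable {V E : Type*} (s r : E → V)

noncomputable def Sv (v : V) : V →₀ ℕ := ∑ᶠ e ∈ {e : E | s e = v}, Finsupp.single (r e) 1

theorem Sv_ne_zero (hrow : ∀ v, {e : E | s e = v}.Finite) {v : V} (he : ∃ e, s e = v) : Sv s r v ≠ 0 := by
  obtain ⟨e0, he0⟩ := he
  rw [Sv, finsum_mem_eq_finite_toFinset_sum _ (hrow v)]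
  intro h
  have h1 : (1 : ℕ) ≤ (∑ e ∈ (hrow v).toFinset, Finsupp.single (r e) 1) (r e0) := by
    rw [Finsupp.finset_sum_apply]
    have : (Finsupp.single (r e0) (1:ℕ)) (r e0) = 1 := by simp
    calc (1:ℕ) = (Finsupp.single (r e0) (1:ℕ)) (r e0) := this.symm
    _ ≤ _ := Finset.single_le_sum (f := fun e => (Finsupp.single (r e) (1:ℕ)) (r e0))
        (fun _ _ => Nat.zero_le _) (by simp [he0])
  rw [h] at h1; simp at h1

theorem step_add {a b c : V →₀ ℕ} (h : graphStep s r a b) :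
    graphStep s r (a + c) (b + c) := by
  obtain ⟨v, α, he, ha, hb⟩ := h
  exact ⟨v, α + c, he, by rw [ha]; abel, by rw [hb]; abel⟩

theorem rtg_add {a b c : V →₀ ℕ} (h : Relation.ReflTransGen (graphStep s r) a b) :
    Relation.ReflTransGen (graphStep s r) (a + c) (b + c) := by
  induction h with
  | refl => exact .refl
  | tail _ h ih => exact ih.tail (step_add s r h)

theorem step_ne_zero (hrow : ∀ v, {e : E | s e = v}.Finite) {a b : V →₀ ℕ} (h : graphStep s r a b) : b ≠ 0 := by
  obtain ⟨v, α, he, _, hb⟩ := h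
  intro h0
  rw [h0] at hb
  exact Sv_ne_zero s r hrow he (by
    have := (add_eq_zero_iff_of_nonneg (by positivity) (by positivity)).mp hb.symm
    exact this.2)

theorem rtg_ne_zero (hrow : ∀ v, {e : E | s e = v}.Finite) {a b : V →₀ ℕ} (ha : a ≠ 0)
    (h : Relation.ReflTransGen (graphStep s r) a b) : b ≠ 0 := by
  induction h with
  | refl => exact ha
  | tail _ h _ => exact step_ne_zero s r hrow h

theorem local_confluence : ∀ a b c, graphStep s r a b → graphStep s r a c →
    ∃ d, Relation.ReflGen (graphStep s r) b d ∧
      Relation.ReflTransGen (graphStep s r) c d := by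
  rintro a b c ⟨v, α, hev, hav, hbv⟩ ⟨w, α', hew, haw, hbw⟩
  by_cases hvw : v = w
  · subst hvw
    have : α = α' := by
      have := hav.symm.trans haw
      exact add_right_cancel this
    subst this
    exact ⟨b, .refl, by rw [hbv, ← hbw]⟩
  · -- a contains both v and w
    have hw1 : Finsupp.single w 1 ≤ α := by
      rw [Finsupp.single_le_iff]
      have := congrArg (fun f => f w) (hav.symm.trans haw)
      simp only [Finsupp.add_apply, Finsupp.single_eq_same, Finsupp.single_eq_of_ne' hvw] at this
      omega
    obtain ⟨δ, hδ⟩ : ∃ δ, α = δ + Finsupp.single w 1 :=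
      ⟨α - Finsupp.single w 1, (tsub_add_cancel_of_le hw1).symm⟩
    have hα' : α' = δ + Finsupp.single v 1 := by
      have h1 : δ + Finsupp.single w 1 + Finsupp.single v 1
          = α' + Finsupp.single w 1 := by rw [← hδ, ← hav, haw]
      have h2 : δ + Finsupp.single v 1 + Finsupp.single w 1
          = α' + Finsupp.single w 1 := by rw [← h1]; abel
      exact (add_right_cancel h2).symm
    refine ⟨δ + Sv s r v + Sv s r w, ?_, ?_⟩
    · apply Relation.ReflGen.single
      exact ⟨w, δ + Sv s r v, hew, by rw [hbv, hδ, Sv]; abel, by simp only [Sv]⟩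
    · apply Relation.ReflTransGen.single
      refine ⟨v, δ + Sv s r w, hev, by rw [hbw, hα', Sv]; abel, ?_⟩
      simp only [Sv]; abel

end Aux

/-- confluence: for a row-finite graph `E`, nonzero `α, β` in the free
commutative monoid on `E⁰` are identified by the congruence `∼` generated by `→`
(the reflexive transitive closure of `→₁`) if and only if there is a nonzero `γ` with
`α → γ` and `β → γ`. -/
theorem stmt_8 {V E : Type*} (s r : E → V)
    (hrow : ∀ v, {e : E | s e = v}.Finite)
    (α β : V →₀ ℕ) (hα : α ≠ 0) (hβ : β ≠ 0) :
    addConGen (Relation.ReflTransGen (graphStep s r)) α β ↔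
      ∃ γ : V →₀ ℕ, γ ≠ 0 ∧ Relation.ReflTransGen (graphStep s r) α γ ∧
        Relation.ReflTransGen (graphStep s r) β γ := by
  set R := Relation.ReflTransGen (graphStep s r) with hR
  have heqv : Equivalence (Relation.Join R) :=
    Relation.equivalence_join_reflTransGen (local_confluence s r)
  let c : AddCon (V →₀ ℕ) :=
    { r := Relation.Join R
      iseqv := heqv
      add' := by
        rintro w x y z ⟨d, hwd, hxd⟩ ⟨d', hyd, hzd⟩
        exact ⟨d + d', Relation.ReflTransGen.trans (rtg_add s r hwd)
          (by simpa [add_comm] using rtg_add s r (c := d) hyd),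
          Relation.ReflTransGen.trans (rtg_add s r hxd)
          (by simpa [add_comm] using rtg_add s r (c := d) hzd)⟩ }
  constructor
  · intro h
    have hle : addConGen R ≤ c := AddCon.addConGen_le.mpr fun x y hxy => ⟨y, hxy, .refl⟩
    obtain ⟨γ, h1, h2⟩ := hle h
    exact ⟨γ, rtg_ne_zero s r hrow hα h1, h1, h2⟩
  · rintro ⟨γ, _, h1, h2⟩
    exact (addConGen R).trans (AddConGen.Rel.of _ _ h1)
      ((addConGen R).symm (AddConGen.Rel.of _ _ h2))
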